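/- Let U > 0, l ≥ 0, and let ū : ℝ → [−U/2, U/2] be measurable and non-increasing with ∫_ℝ z (ū(z) − u₀(z)) dz = U l²/2, where u₀(z) = −U/2 for z ≥ 0 and u₀(z) = U/2 for z < 0. Then (1/U) ∫_ℝ (1/2)(U²/4 − ū(z)²) dz ≤ U l / √12. -/

import Mathlib

open MeasureTheory Set
open scoped ENNReal

noncomputable section

/-- the reference (discontinuous) shear profile u₀ -/
def u0 (U z : ℝ) : ℝ := if 0 ≤ z then -U / 2 else U / 2


/-- elementary segment integral -/
lemma lint_seg (a b : ℝ) (hab : a ≤ b) :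
    (∫⁻ s in Ioo a b, ENNReal.ofReal (s - a)) = ENNReal.ofReal ((b - a)^2/2) := by
  have hInt : IntegrableOn (fun s => s - a) (Ioo a b) := by
    refine IntegrableOn.mono_set ?_ Ioo_subset_Ioc_self
    exact (intervalIntegrable_iff_integrableOn_Ioc_of_le hab).1
      (intervalIntegral.intervalIntegrable_id.sub (intervalIntegrable_const (c := a)))
  have h0 : (0:ℝ→ℝ) ≤ᵐ[volume.restrict (Ioo a b)] fun s => s - a := by
    filter_upwards [ae_restrict_mem measurableSet_Ioo] with s hs
    simp only [Pi.zero_apply]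
    linarith [hs.1]
  rw [← ofReal_integral_eq_lintegral_ofReal hInt h0]
  congr 1
  rw [← integral_Ioc_eq_integral_Ioo, ← intervalIntegral.integral_of_le hab,
    intervalIntegral.integral_sub intervalIntegral.intervalIntegrable_id
      (intervalIntegrable_const (c := a)),
    integral_id, intervalIntegral.integral_const]
  simp only [smul_eq_mul]
  ring

/-- Cauchy–Schwarz for real integrals. -/
lemma my_cauchy_schwarz {μ : Measure ℝ} {f g : ℝ → ℝ}
    (hf : AEMeasurable f μ) (hg : AEMeasurable g μ)
    (hf2 : Integrable (fun x => f x ^ 2) μ) (hg2 : Integrable (fun x => g x ^ 2) μ) :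
    ∫ x, f x * g x ∂μ ≤ Real.sqrt (∫ x, f x ^ 2 ∂μ) * Real.sqrt (∫ x, g x ^ 2 ∂μ) := by
  have hb : Integrable (fun x => (f x ^ 2 + g x ^ 2) / 2) μ := by
    simpa using (hf2.add hg2).div_const 2
  have hfg : Integrable (fun x => f x * g x) μ := by
    refine Integrable.mono' hb (hf.mul hg).aestronglyMeasurable ?_
    filter_upwards with x
    rw [Real.norm_eq_abs, abs_mul]
    nlinarith [sq_nonneg (|f x| - |g x|), sq_abs (f x), sq_abs (g x), abs_nonneg (f x),
      abs_nonneg (g x)]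
  set X := ∫ x, f x ^ 2 ∂μ with hXdef
  set Y := ∫ x, g x ^ 2 ∂μ with hYdef
  set P := ∫ x, f x * g x ∂μ with hPdef
  have hX0 : 0 ≤ X := integral_nonneg fun x => sq_nonneg _
  have hY0 : 0 ≤ Y := integral_nonneg fun x => sq_nonneg _
  have expand : ∀ t : ℝ, 0 ≤ t ^ 2 * X - 2 * t * P + Y := by
    intro t
    have h1 : (fun x => (t * f x - g x) ^ 2)
        = fun x => t ^ 2 * f x ^ 2 - 2 * t * (f x * g x) + g x ^ 2 := by
      funext x; ring
    have h2 : 0 ≤ ∫ x, (t * f x - g x) ^ 2 ∂μ := integral_nonneg fun x => sq_nonneg _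
    rw [h1] at h2
    have hi1 : Integrable (fun x => t ^ 2 * f x ^ 2 - 2 * t * (f x * g x)) μ := by
      exact (hf2.const_mul (t ^ 2)).sub (hfg.const_mul (2 * t))
    rwa [integral_add hi1 hg2,
      integral_sub (hf2.const_mul _) (hfg.const_mul _), integral_const_mul,
      integral_const_mul, ← hXdef, ← hPdef, ← hYdef] at h2
  have key : P ^ 2 ≤ X * Y := by
    rcases eq_or_lt_of_le hX0 with h0 | hpos
    · have hf0 : (fun x => f x ^ 2) =ᵐ[μ] 0 := by
        rw [← integral_eq_zero_iff_of_nonneg (fun x => sq_nonneg _) hf2, ← hXdef, ← h0]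
      have hfg0 : (fun x => f x * g x) =ᵐ[μ] 0 := by
        filter_upwards [hf0] with x hx
        have hx0 : f x = 0 := by
          have h' : f x ^ 2 = 0 := hx
          nlinarith [h']
        simp [hx0]
      have hP0 : P = 0 := by rw [hPdef, integral_congr_ae hfg0]; simp
      rw [hP0]
      nlinarith [mul_nonneg hX0 hY0]
    · have h := expand (P / X)
      have hX : (0:ℝ) < X := hpos
      have e1 : (P / X) ^ 2 * X = P ^ 2 / X := by
        field_simp
      have e2 : 2 * (P / X) * P = 2 * (P ^ 2 / X) := by ring
      rw [e1, e2] at h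
      have h3 : P ^ 2 / X ≤ Y := by linarith
      have h4 : P ^ 2 ≤ Y * X := (div_le_iff₀ hX).1 h3
      nlinarith [h4]
  calc P ≤ |P| := le_abs_self _
    _ = Real.sqrt (P ^ 2) := (Real.sqrt_sq_eq_abs P).symm
    _ ≤ Real.sqrt (X * Y) := Real.sqrt_le_sqrt key
    _ = Real.sqrt X * Real.sqrt Y := Real.sqrt_mul hX0 Y

/-- transfer of equal finite lintegrals to Bochner integrals -/
lemma integral_eq_of_lintegral_eq {μ ν : Measure ℝ} {f g : ℝ → ℝ}
    (hf : AEMeasurable f μ) (hg : AEMeasurable g ν)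
    (hf0 : 0 ≤ᵐ[μ] f) (hg0 : 0 ≤ᵐ[ν] g)
    (h : ∫⁻ x, ENNReal.ofReal (f x) ∂μ = ∫⁻ x, ENNReal.ofReal (g x) ∂ν)
    (hfin : ∫⁻ x, ENNReal.ofReal (f x) ∂μ ≠ ⊤) :
    Integrable f μ ∧ Integrable g ν ∧ ∫ x, f x ∂μ = ∫ x, g x ∂ν := by
  have hif : Integrable f μ :=
    ⟨hf.aestronglyMeasurable, (hasFiniteIntegral_iff_ofReal hf0).2 hfin.lt_top⟩
  have hig : Integrable g ν :=
    ⟨hg.aestronglyMeasurable, (hasFiniteIntegral_iff_ofReal hg0).2 (h ▸ hfin.lt_top)⟩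
  refine ⟨hif, hig, ?_⟩
  rw [integral_eq_lintegral_of_nonneg_ae hf0 hf.aestronglyMeasurable,
    integral_eq_lintegral_of_nonneg_ae hg0 hg.aestronglyMeasurable, h]


lemma one_side (U : ℝ) (hU : 0 < U) (v : ℝ → ℝ) (hv : Measurable v) (hva : Antitone v)
    (hr : ∀ z, v z ∈ Set.Icc (-(U/2)) (U/2))
    (hint : IntegrableOn (fun z => z * (v z + U/2)) (Ioi 0)) :
    ∃ A : ℝ → ℝ, Measurable A ∧ (∀ s, 0 ≤ A s) ∧
      IntegrableOn (fun s => (A s)^2) (Ioo (-(U/2)) (U/2)) ∧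
      IntegrableOn (fun z => (1/2) * (U^2/4 - (v z)^2)) (Ioi 0) ∧
      IntegrableOn (fun s => (-s) * A s) (Ioo (-(U/2)) (U/2)) ∧
      (∫ z in Ioi 0, (1/2) * (U^2/4 - (v z)^2)) = (∫ s in Ioo (-(U/2)) (U/2), (-s) * A s) ∧
      (∫ z in Ioi 0, z * (v z + U/2)) = ∫ s in Ioo (-(U/2)) (U/2), (A s)^2 / 2 := by
  have hr1 : ∀ z, -(U/2) ≤ v z := fun z => (hr z).1
  have hr2 : ∀ z, v z ≤ U/2 := fun z => (hr z).2
  set I : Set ℝ := Ioo (-(U/2)) (U/2) with hI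
  set ν : ℝ → ℝ≥0∞ := fun s => volume ({z | s < v z} ∩ Ioi 0) with hν
  set A : ℝ → ℝ := fun s => (ν s).toReal with hA
  have hν_anti : Antitone ν := by
    intro s s' hss
    exact measure_mono (inter_subset_inter_left _ (fun z hz => lt_of_le_of_lt hss hz))
  have hν_meas : Measurable ν := hν_anti.measurable
  have hA_meas : Measurable A := ENNReal.measurable_toReal.comp hν_meas
  have hA_nonneg : ∀ s, 0 ≤ A s := fun s => ENNReal.toReal_nonneg
  -- integrability of v + U/2 on Ioi 0
  have hv1 : IntegrableOn (fun z => v z + U/2) (Ioi 0) := by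
    have hsplit : Ioc (0:ℝ) 1 ∪ Ioi 1 = Ioi 0 := Ioc_union_Ioi_eq_Ioi zero_le_one
    rw [← hsplit]
    refine IntegrableOn.union ?_ ?_
    · refine Integrable.mono' (g := fun _ => U)
        (integrableOn_const measure_Ioc_lt_top.ne)
        ((hv.add_const _).aestronglyMeasurable) ?_
      filter_upwards with z
      rw [Real.norm_eq_abs, abs_of_nonneg (by linarith [hr1 z])]
      linarith [hr2 z]
    · refine Integrable.mono' (hint.mono_set (Ioi_subset_Ioi zero_le_one))
        ((hv.add_const _).aestronglyMeasurable) ?_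
      rw [ae_restrict_iff' measurableSet_Ioi]
      filter_upwards with z hz
      have h1 : (1:ℝ) ≤ z := le_of_lt hz
      rw [Real.norm_eq_abs, abs_of_nonneg (by linarith [hr1 z])]
      nlinarith [hr1 z]
  have hv1_nonneg : (0:ℝ→ℝ) ≤ᵐ[volume.restrict (Ioi 0)] (fun z => v z + U/2) := by
    filter_upwards with z; simpa using by linarith [hr1 z]
  have hK : (∫⁻ z in Ioi 0, ENNReal.ofReal (v z + U/2)) ≠ ⊤ :=
    ((hasFiniteIntegral_iff_ofReal hv1_nonneg).1 hv1.2).ne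
  -- the indicator kernel
  set ind : ℝ → ℝ → ℝ≥0∞ := fun z s => if s < v z then (1:ℝ≥0∞) else 0 with hind
  have hindu : Measurable (Function.uncurry ind) := by
    have : Function.uncurry ind = fun p : ℝ × ℝ => if p.2 < v p.1 then (1:ℝ≥0∞) else 0 := rfl
    rw [this]
    exact Measurable.ite (measurableSet_lt measurable_snd (hv.comp measurable_fst))
      measurable_const measurable_const
  have hind_z : ∀ z, Measurable (fun s => ind z s) := fun z =>
    Measurable.ite measurableSet_Iio measurable_const measurable_const
  have hind_s : ∀ s, Measurable (fun z => ind z s) := fun s =>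
    Measurable.ite (hv measurableSet_Ioi) measurable_const measurable_const
  -- generic Tonelli swap
  have swap : ∀ φ ψ : ℝ → ℝ≥0∞, Measurable φ → Measurable ψ →
      (∫⁻ z in Ioi 0, φ z * ∫⁻ s in I, ψ s * ind z s)
        = ∫⁻ s in I, ψ s * ∫⁻ z in Ioi 0, φ z * ind z s := by
    intro φ ψ hφ hψ
    have hm : AEMeasurable (Function.uncurry fun z s => φ z * (ψ s * ind z s))
        ((volume.restrict (Ioi 0)).prod (volume.restrict I)) := by
      refine Measurable.aemeasurable ?_
      have : Function.uncurry (fun z s => φ z * (ψ s * ind z s))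
          = fun p : ℝ × ℝ => φ p.1 * (ψ p.2 * Function.uncurry ind p) := rfl
      rw [this]
      exact (hφ.comp measurable_fst).mul ((hψ.comp measurable_snd).mul hindu)
    calc (∫⁻ z in Ioi 0, φ z * ∫⁻ s in I, ψ s * ind z s)
        = ∫⁻ z in Ioi 0, ∫⁻ s in I, φ z * (ψ s * ind z s) := by
          refine lintegral_congr fun z => ?_
          rw [lintegral_const_mul (f := fun s => ψ s * ind z s) _ (hψ.mul (hind_z z))]
      _ = ∫⁻ s in I, ∫⁻ z in Ioi 0, φ z * (ψ s * ind z s) := lintegral_lintegral_swap hm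
      _ = ∫⁻ s in I, ψ s * ∫⁻ z in Ioi 0, φ z * ind z s := by
          refine lintegral_congr fun s => ?_
          rw [← lintegral_const_mul (f := fun z => φ z * ind z s) _ (hφ.mul (hind_s s))]
          refine lintegral_congr fun z => ?_
          ring
  -- inner integral in s, weight 1
  have hinner1 : ∀ z, (∫⁻ s in I, ind z s) = ENNReal.ofReal (v z + U/2) := by
    intro z
    have h1 : (fun s => ind z s) = (Iio (v z)).indicator (fun _ => (1:ℝ≥0∞)) := by
      funext s; by_cases h : s < v z <;> simp [hind, h, Set.indicator]
    rw [h1, lintegral_indicator measurableSet_Iio, setLIntegral_one,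
      Measure.restrict_apply measurableSet_Iio]
    have h2 : Iio (v z) ∩ I = Ioo (-(U/2)) (v z) := by
      ext s
      constructor
      · rintro ⟨h3, h4, h5⟩; exact ⟨h4, h3⟩
      · rintro ⟨h4, h3⟩; exact ⟨h3, h4, lt_of_lt_of_le h3 (hr2 z)⟩
    rw [h2, Real.volume_Ioo]
    congr 1; ring
  -- inner integral in s, weight ofReal (s + U/2)
  have hinner2 : ∀ z, (∫⁻ s in I, ENNReal.ofReal (s + U/2) * ind z s)
      = ENNReal.ofReal ((v z + U/2)^2/2) := by
    intro z
    have h1 : (fun s => ENNReal.ofReal (s + U/2) * ind z s)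
        = (Iio (v z)).indicator (fun s => ENNReal.ofReal (s + U/2)) := by
      funext s; by_cases h : s < v z <;> simp [hind, h, Set.indicator]
    rw [h1, lintegral_indicator measurableSet_Iio, Measure.restrict_restrict measurableSet_Iio]
    have h2 : Iio (v z) ∩ I = Ioo (-(U/2)) (v z) := by
      ext s
      constructor
      · rintro ⟨h3, h4, h5⟩; exact ⟨h4, h3⟩
      · rintro ⟨h4, h3⟩; exact ⟨h3, h4, lt_of_lt_of_le h3 (hr2 z)⟩
    rw [h2]
    have hle : -(U/2) ≤ v z := hr1 z
    have hseg := lint_seg (-(U/2)) (v z) hle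
    simp only [sub_neg_eq_add] at hseg
    rw [hseg]
  -- inner integral in z for a weight φ
  have hzinner : ∀ (φ : ℝ → ℝ≥0∞), ∀ s, (∫⁻ z in Ioi 0, φ z * ind z s)
      = ∫⁻ z in {z | s < v z} ∩ Ioi 0, φ z := by
    intro φ s
    have h1 : (fun z => φ z * ind z s) = ({z | s < v z}).indicator φ := by
      funext z; by_cases h : s < v z <;> simp [hind, h, Set.indicator]
    have hms : MeasurableSet {z | s < v z} := measurableSet_lt measurable_const hv
    rw [h1, lintegral_indicator hms, Measure.restrict_restrict hms]
  -- Tonelli instance 1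
  have E1 : (∫⁻ z in Ioi 0, ENNReal.ofReal (v z + U/2)) = ∫⁻ s in I, ν s := by
    have hs := swap (fun _ => 1) (fun _ => 1) measurable_const measurable_const
    simp only [one_mul] at hs
    calc (∫⁻ z in Ioi 0, ENNReal.ofReal (v z + U/2))
        = ∫⁻ z in Ioi 0, ∫⁻ s in I, ind z s := lintegral_congr fun z => (hinner1 z).symm
      _ = ∫⁻ s in I, ∫⁻ z in Ioi 0, ind z s := hs
      _ = ∫⁻ s in I, ν s := by
          refine lintegral_congr fun s => ?_
          have h3 := hzinner (fun _ => 1) s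
          simp only [one_mul] at h3
          rw [h3, setLIntegral_one]
  have hE1fin : (∫⁻ s in I, ν s) ≠ ⊤ := by rw [← E1]; exact hK
  have hν_fin_ae : ∀ᵐ s ∂(volume.restrict I), ν s < ⊤ := ae_lt_top hν_meas hE1fin
  -- structure of superlevel sets
  have hstruct : ∀ s : ℝ, ν s ≠ ⊤ → ({z | s < v z} ∩ Ioi 0 : Set ℝ) =ᵐ[volume] Ioo 0 (A s) := by
    intro s hs
    set S : Set ℝ := {z | s < v z} ∩ Ioi 0 with hS
    have hνS : ν s = volume S := rfl
    have hdc : ∀ x ∈ S, ∀ y : ℝ, 0 < y → y ≤ x → y ∈ S := by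
      intro x hx y hy hyx
      exact ⟨lt_of_lt_of_le hx.1 (hva hyx), hy⟩
    rcases S.eq_empty_or_nonempty with hSe | hSne
    · have hν0 : ν s = 0 := by rw [hνS, hSe, measure_empty]
      have hA0 : A s = 0 := by simp [hA, hν0]
      rw [hSe, hA0, Ioo_self]; exact Filter.EventuallyEq.rfl
    · obtain ⟨x0, hx0⟩ := hSne
      have hbdd : BddAbove S := by
        refine ⟨(ν s).toReal, fun x hx => ?_⟩
        have hsub : Ioo 0 x ⊆ S := fun y hy => hdc x hx y hy.1 hy.2.le
        have h1 : ENNReal.ofReal x ≤ ν s := by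
          calc ENNReal.ofReal x = volume (Ioo (0:ℝ) x) := by rw [Real.volume_Ioo, sub_zero]
            _ ≤ volume S := measure_mono hsub
            _ = ν s := hνS.symm
        calc x = (ENNReal.ofReal x).toReal := by rw [ENNReal.toReal_ofReal (le_of_lt hx.2)]
          _ ≤ (ν s).toReal := ENNReal.toReal_mono hs h1
      set a := sSup S with ha
      have hax0 : x0 ≤ a := le_csSup hbdd hx0
      have ha_pos : 0 < a := lt_of_lt_of_le hx0.2 hax0
      have hsub1 : Ioo 0 a ⊆ S := by
        intro y hy
        obtain ⟨x, hx, hyx⟩ := exists_lt_of_lt_csSup ⟨x0, hx0⟩ hy.2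
        exact hdc x hx y hy.1 hyx.le
      have hsub2 : S ⊆ Ioc 0 a := fun x hx => ⟨hx.2, le_csSup hbdd hx⟩
      have hνa : ν s = ENNReal.ofReal a := by
        refine le_antisymm ?_ ?_
        · calc ν s = volume S := hνS
            _ ≤ volume (Ioc 0 a) := measure_mono hsub2
            _ = ENNReal.ofReal a := by rw [Real.volume_Ioc, sub_zero]
        · calc ENNReal.ofReal a = volume (Ioo 0 a) := by rw [Real.volume_Ioo, sub_zero]
            _ ≤ volume S := measure_mono hsub1
            _ = ν s := hνS.symm
      have hAa : A s = a := by simp [hA, hνa, ENNReal.toReal_ofReal ha_pos.le]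
      rw [hAa, MeasureTheory.ae_eq_set]
      constructor
      · refine measure_mono_null (t := {a}) (fun x hx => ?_) Real.volume_singleton
        have h1 := hsub2 hx.1
        have h2 := hx.2
        simp only [mem_Ioo, not_and, not_lt, mem_singleton_iff] at h2 ⊢
        exact le_antisymm h1.2 (h2 h1.1)
      · rw [diff_eq_empty.2 hsub1, measure_empty]
  -- a.e. identity ν s = ofReal (A s)
  have hνA : ∀ᵐ s ∂(volume.restrict I), ν s = ENNReal.ofReal (A s) := by
    filter_upwards [hν_fin_ae] with s hs
    have : A s = (ν s).toReal := rfl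
    rw [this, ENNReal.ofReal_toReal hs.ne]
  have E1' : (∫⁻ z in Ioi 0, ENNReal.ofReal (v z + U/2))
      = ∫⁻ s in I, ENNReal.ofReal (A s) := by
    rw [E1]; exact lintegral_congr_ae hνA
  -- Tonelli instance 2
  have E2 : (∫⁻ z in Ioi 0, ENNReal.ofReal ((v z + U/2)^2/2))
      = ∫⁻ s in I, ENNReal.ofReal ((s + U/2) * A s) := by
    have hψ : Measurable fun s : ℝ => ENNReal.ofReal (s + U/2) :=
      (measurable_id.add_const _).ennreal_ofReal
    have hsw := swap (fun _ => 1) (fun s => ENNReal.ofReal (s + U/2)) measurable_const hψ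
    simp only [one_mul] at hsw
    calc (∫⁻ z in Ioi 0, ENNReal.ofReal ((v z + U/2)^2/2))
        = ∫⁻ z in Ioi 0, ∫⁻ s in I, ENNReal.ofReal (s + U/2) * ind z s :=
          lintegral_congr fun z => (hinner2 z).symm
      _ = ∫⁻ s in I, ENNReal.ofReal (s + U/2) * ∫⁻ z in Ioi 0, ind z s := hsw
      _ = ∫⁻ s in I, ENNReal.ofReal (s + U/2) * ν s := by
          refine lintegral_congr fun s => ?_
          have h3 := hzinner (fun _ => 1) s
          simp only [one_mul] at h3
          rw [h3, setLIntegral_one]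
      _ = ∫⁻ s in I, ENNReal.ofReal ((s + U/2) * A s) := by
          refine lintegral_congr_ae ?_
          filter_upwards [hνA, ae_restrict_mem measurableSet_Ioo] with s hs hsI
          rw [hs, ← ENNReal.ofReal_mul (by linarith [hsI.1] : (0:ℝ) ≤ s + U/2)]
  -- Tonelli instance 3
  have E3 : (∫⁻ z in Ioi 0, ENNReal.ofReal (z * (v z + U/2)))
      = ∫⁻ s in I, ENNReal.ofReal ((A s)^2/2) := by
    have hφ : Measurable fun z : ℝ => ENNReal.ofReal z := measurable_id.ennreal_ofReal
    have hsw := swap (fun z => ENNReal.ofReal z) (fun _ => 1) hφ measurable_const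
    simp only [one_mul] at hsw
    calc (∫⁻ z in Ioi 0, ENNReal.ofReal (z * (v z + U/2)))
        = ∫⁻ z in Ioi 0, ENNReal.ofReal z * ENNReal.ofReal (v z + U/2) := by
          refine lintegral_congr_ae ?_
          filter_upwards [ae_restrict_mem measurableSet_Ioi] with z hz
          rw [ENNReal.ofReal_mul (le_of_lt hz)]
      _ = ∫⁻ z in Ioi 0, ENNReal.ofReal z * ∫⁻ s in I, ind z s :=
          lintegral_congr fun z => by rw [hinner1 z]
      _ = ∫⁻ s in I, ∫⁻ z in Ioi 0, ENNReal.ofReal z * ind z s := hsw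
      _ = ∫⁻ s in I, ENNReal.ofReal ((A s)^2/2) := by
          refine lintegral_congr_ae ?_
          filter_upwards [hν_fin_ae] with s hsfin
          rw [hzinner (fun z => ENNReal.ofReal z) s,
            setLIntegral_congr (hstruct s hsfin.ne)]
          have hseg := lint_seg 0 (A s) (hA_nonneg s)
          simp only [sub_zero] at hseg
          rw [hseg]
  -- finiteness
  have hK2 : (∫⁻ z in Ioi 0, ENNReal.ofReal ((v z + U/2)^2/2)) ≠ ⊤ := by
    have hb : ∀ z, ENNReal.ofReal ((v z + U/2)^2/2)
        ≤ ENNReal.ofReal (U/2) * ENNReal.ofReal (v z + U/2) := by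
      intro z
      rw [← ENNReal.ofReal_mul (by linarith : (0:ℝ) ≤ U/2)]
      apply ENNReal.ofReal_le_ofReal
      nlinarith [hr1 z, hr2 z]
    refine ne_top_of_le_ne_top ?_ (lintegral_mono hb)
    rw [lintegral_const_mul' _ _ ENNReal.ofReal_ne_top]
    exact ENNReal.mul_ne_top ENNReal.ofReal_ne_top hK
  have hmom_nonneg : (0:ℝ→ℝ) ≤ᵐ[volume.restrict (Ioi 0)] fun z => z * (v z + U/2) := by
    filter_upwards [ae_restrict_mem measurableSet_Ioi] with z hz
    have h1 := hr1 z
    have h2 : (0:ℝ) < z := hz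
    simp only [Pi.zero_apply]
    nlinarith
  have hK3 : (∫⁻ z in Ioi 0, ENNReal.ofReal (z * (v z + U/2))) ≠ ⊤ :=
    ((hasFiniteIntegral_iff_ofReal hmom_nonneg).1 hint.2).ne
  -- Bochner conversions
  obtain ⟨hint1, hAint, eq1⟩ := integral_eq_of_lintegral_eq
    ((hv.add_const _).aemeasurable) (hA_meas.aemeasurable) hv1_nonneg
    (ae_of_all _ hA_nonneg) E1' hK
  obtain ⟨hsqint, hsAint, eq2⟩ := integral_eq_of_lintegral_eq
    (f := fun z => (v z + U/2)^2/2) (g := fun s => (s + U/2) * A s)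
    ((((hv.add_const _).pow_const 2).div_const 2).aemeasurable)
    (((measurable_id.add_const _).mul hA_meas).aemeasurable)
    (ae_of_all _ fun z => by positivity)
    (by filter_upwards [ae_restrict_mem measurableSet_Ioo] with s hsI
        simp only [Pi.zero_apply]
        have h1 : (0:ℝ) ≤ s + U/2 := by linarith [hsI.1]
        exact mul_nonneg h1 (hA_nonneg s))
    E2 hK2
  obtain ⟨hint3, hA2int, eq3⟩ := integral_eq_of_lintegral_eq
    (f := fun z => z * (v z + U/2)) (g := fun s => (A s)^2/2)
    ((measurable_id.mul (hv.add_const _)).aemeasurable)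
    (((hA_meas.pow_const 2).div_const 2).aemeasurable)
    hmom_nonneg (ae_of_all _ fun s => by positivity) E3 hK3
  refine ⟨A, hA_meas, hA_nonneg, ?_, ?_, ?_, ?_, ?_⟩
  · refine (hA2int.const_mul 2).congr (ae_of_all _ fun s => ?_)
    simp only; ring
  · have hgv : (fun z => (1/2) * (U^2/4 - (v z)^2))
        = fun z => (U/2) * (v z + U/2) - (v z + U/2)^2/2 := by
      funext z; ring
    rw [hgv]
    exact (hint1.const_mul (U/2)).sub hsqint
  · have hgA : (fun s => (-s) * A s)
        = fun s => (U/2) * A s - (s + U/2) * A s := by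
      funext s; ring
    rw [hgA]
    exact (hAint.const_mul (U/2)).sub hsAint
  · have hgv : (fun z : ℝ => (1/2) * (U^2/4 - (v z)^2))
        = fun z => (U/2) * (v z + U/2) - (v z + U/2)^2/2 := by
      funext z; ring
    rw [hgv, integral_sub (hint1.const_mul (U/2)) hsqint, integral_const_mul, eq1, eq2,
      ← integral_const_mul, ← integral_sub (hAint.const_mul (U/2)) hsAint]
    refine integral_congr_ae (ae_of_all _ fun s => ?_)
    simp only; ring
  · exact eq3

theorem interpolation_for_burgers_flux
    (U l : ℝ) (hU : 0 < U) (hl : 0 ≤ l)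
    (ubar : ℝ → ℝ) (h_meas : Measurable ubar) (h_anti : Antitone ubar)
    (h_range : ∀ z : ℝ, ubar z ∈ Set.Icc (-(U/2)) (U/2))
    (h_mom_int : MeasureTheory.Integrable (fun z => z * (ubar z - u0 U z)))
    (h_mom : (∫ z : ℝ, z * (ubar z - u0 U z)) = U * l ^ 2 / 2) :
    (1 / U) * ∫ z : ℝ, (1 / 2) * (U ^ 2 / 4 - (ubar z) ^ 2) ≤ U * l / Real.sqrt 12 := by
  set I : Set ℝ := Ioo (-(U/2)) (U/2) with hI
  -- right side
  have hint_r : IntegrableOn (fun z => z * (ubar z + U/2)) (Ioi 0) := by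
    refine (h_mom_int.integrableOn).congr_fun ?_ measurableSet_Ioi
    intro z hz
    have hz0 : (0:ℝ) < z := hz
    simp only [u0, if_pos hz0.le]
    ring
  obtain ⟨A, hAmeas, hAnn, hA2int, hgint_r, hnegAint, eqA, eqA2⟩ :=
    one_side U hU ubar h_meas h_anti h_range hint_r
  -- left side via reflection
  set w : ℝ → ℝ := fun x => -(ubar (-x)) with hw
  have hwmeas : Measurable w := (h_meas.comp measurable_neg).neg
  have hwanti : Antitone w := by
    intro a b hab
    simp only [hw]
    have := h_anti (neg_le_neg hab)
    linarith
  have hwrange : ∀ x, w x ∈ Set.Icc (-(U/2)) (U/2) := by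
    intro x
    have h1 := h_range (-x)
    constructor
    · simp only [hw]; linarith [h1.2]
    · simp only [hw]; linarith [h1.1]
  have hnegemb : MeasurableEmbedding (fun x : ℝ => -x) :=
    (Homeomorph.neg ℝ).measurableEmbedding
  have hnegmp : MeasurePreserving (fun x : ℝ => -x) volume volume :=
    Measure.measurePreserving_neg _
  have hint_w : IntegrableOn (fun x => x * (w x + U/2)) (Ioi 0) := by
    have h1 : IntegrableOn (fun z => z * (ubar z - u0 U z)) (Iio 0) := h_mom_int.integrableOn
    have h2 : IntegrableOn ((fun z => z * (ubar z - u0 U z)) ∘ (fun x : ℝ => -x))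
        ((fun x : ℝ => -x) ⁻¹' (Iio 0)) :=
      (hnegmp.integrableOn_comp_preimage hnegemb).2 h1
    have h3 : ((fun x : ℝ => -x) ⁻¹' (Iio 0)) = Ioi 0 := by
      ext x; simp
    rw [h3] at h2
    refine h2.congr_fun ?_ measurableSet_Ioi
    intro x hx
    have hx0 : (0:ℝ) < x := hx
    simp only [Function.comp, u0, if_neg (by linarith : ¬ (0:ℝ) ≤ -x), hw]
    ring
  obtain ⟨B, hBmeas, hBnn, hB2int, hgint_w, hnegBint, eqB, eqB2⟩ :=
    one_side U hU w hwmeas hwanti hwrange hint_w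
  -- moment split
  have hmom_split : (∫ z in Ioi 0, z * (ubar z + U/2)) + (∫ x in Ioi 0, x * (w x + U/2))
      = U * l^2 / 2 := by
    have h1 : (∫ z : ℝ, z * (ubar z - u0 U z))
        = (∫ z in Ioi 0, z * (ubar z - u0 U z)) + ∫ z in Iic 0, z * (ubar z - u0 U z) := by
      rw [← integral_add_compl measurableSet_Ioi h_mom_int, compl_Ioi]
    have h2 : (∫ z in Ioi 0, z * (ubar z - u0 U z)) = ∫ z in Ioi 0, z * (ubar z + U/2) := by
      refine setIntegral_congr_fun measurableSet_Ioi fun z hz => ?_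
      have hz0 : (0:ℝ) < z := hz
      simp only [u0, if_pos hz0.le]
      ring
    have h3 : (∫ z in Iic 0, z * (ubar z - u0 U z)) = ∫ x in Ioi 0, x * (w x + U/2) := by
      have h4 := integral_comp_neg_Ioi 0 (fun z => z * (ubar z - u0 U z))
      rw [neg_zero] at h4
      rw [← h4]
      refine setIntegral_congr_fun measurableSet_Ioi fun x hx => ?_
      have hx0 : (0:ℝ) < x := hx
      simp only [u0, if_neg (by linarith : ¬ (0:ℝ) ≤ -x), hw]
      ring
    rw [h1, h2, h3] at h_mom
    exact h_mom
  have hmom2 : (∫ s in I, (A s)^2) + (∫ s in I, (B s)^2) = U * l^2 := by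
    have h5 := hmom_split
    rw [eqA2, eqB2] at h5
    have hA' : (∫ s in I, (A s)^2) = 2 * ∫ s in I, (A s)^2/2 := by
      rw [← integral_const_mul]
      exact integral_congr_ae (ae_of_all _ fun s => by ring)
    have hB' : (∫ s in I, (B s)^2) = 2 * ∫ s in I, (B s)^2/2 := by
      rw [← integral_const_mul]
      exact integral_congr_ae (ae_of_all _ fun s => by ring)
    rw [hA', hB']
    linarith
  -- integrability of the flux integrand on Iic 0 and globally
  have hg_Iic : IntegrableOn (fun z => (1/2)*(U^2/4 - (ubar z)^2)) (Iic 0) := by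
    have h2 : IntegrableOn ((fun x => (1/2)*(U^2/4 - (w x)^2)) ∘ (fun z : ℝ => -z))
        ((fun z : ℝ => -z) ⁻¹' (Ioi 0)) := (hnegmp.integrableOn_comp_preimage hnegemb).2 hgint_w
    have h3 : ((fun z : ℝ => -z) ⁻¹' (Ioi 0)) = Iio 0 := by ext z; simp
    rw [h3] at h2
    have h4 : ((fun x => (1/2)*(U^2/4 - (w x)^2)) ∘ (fun z : ℝ => -z))
        = fun z => (1/2)*(U^2/4 - (ubar z)^2) := by
      funext z
      simp only [Function.comp, hw, neg_neg]
      ring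
    rw [h4] at h2
    exact h2.congr_set_ae (Iio_ae_eq_Iic (a := (0:ℝ))).symm
  have hg_int : Integrable (fun z => (1/2)*(U^2/4 - (ubar z)^2)) := by
    rw [← integrableOn_univ, ← Set.Iic_union_Ioi (a := (0:ℝ))]
    exact hg_Iic.union hgint_r
  -- split the flux integral
  have h3g : (∫ z in Iic 0, (1/2)*(U^2/4 - (ubar z)^2)) = ∫ s in I, (-s) * B s := by
    have h4 := integral_comp_neg_Ioi 0 (fun z => (1/2)*(U^2/4 - (ubar z)^2))
    rw [neg_zero] at h4
    rw [← h4, ← eqB]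
    refine setIntegral_congr_fun measurableSet_Ioi fun x hx => ?_
    simp only [hw]
    ring
  have hg_split : (∫ z : ℝ, (1/2)*(U^2/4 - (ubar z)^2))
      = (∫ s in I, (-s) * A s) + ∫ s in I, (-s) * B s := by
    calc (∫ z : ℝ, (1/2)*(U^2/4 - (ubar z)^2))
        = (∫ z in Ioi 0, (1/2)*(U^2/4 - (ubar z)^2))
            + ∫ z in Iic 0, (1/2)*(U^2/4 - (ubar z)^2) := by
          rw [← integral_add_compl measurableSet_Ioi hg_int, compl_Ioi]
      _ = _ := by rw [eqA, h3g]
  -- reflection on the s-interval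
  have hc : -(U/2) ≤ U/2 := by linarith
  have hIneg : ∀ F : ℝ → ℝ, (∫ s in I, F (-s)) = ∫ s in I, F s := by
    intro F
    calc (∫ s in I, F (-s)) = ∫ s in Ioc (-(U/2)) (U/2), F (-s) :=
          (integral_Ioc_eq_integral_Ioo).symm
      _ = ∫ s in (-(U/2))..(U/2), F (-s) := (intervalIntegral.integral_of_le hc).symm
      _ = ∫ s in (-(U/2))..(U/2), F s := by
          rw [intervalIntegral.integral_comp_neg]
          norm_num
      _ = ∫ s in Ioc (-(U/2)) (U/2), F s := intervalIntegral.integral_of_le hc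
      _ = ∫ s in I, F s := integral_Ioc_eq_integral_Ioo
  have hnegpre : ((fun s : ℝ => -s) ⁻¹' I) = I := by
    ext s
    simp only [hI, mem_preimage, mem_Ioo]
    constructor <;> intro h <;> constructor <;> linarith [h.1, h.2]
  have hsBint : IntegrableOn (fun s => s * B (-s)) I := by
    have h2 := (hnegmp.integrableOn_comp_preimage hnegemb).2 hnegBint
    rw [hnegpre] at h2
    have h4 : ((fun t => (-t) * B t) ∘ (fun s : ℝ => -s)) = fun s => s * B (-s) := by
      funext s; simp [Function.comp]
    rw [h4] at h2
    exact h2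
  have hB2negint : IntegrableOn (fun s => (B (-s))^2) I := by
    have h2 := (hnegmp.integrableOn_comp_preimage hnegemb).2 hB2int
    rw [hnegpre] at h2
    exact h2
  have hsym : (∫ s in I, (-s) * B s) = ∫ s in I, s * B (-s) := by
    have h5 := hIneg (fun t => (-t) * B t)
    simp only [neg_neg] at h5
    exact h5.symm
  -- the combined profile D
  have hBneg_eq : (∫ s in I, (B (-s))^2) = ∫ s in I, (B s)^2 := hIneg (fun t => (B t)^2)
  have hABint : IntegrableOn (fun s => A s * B (-s)) I := by
    refine Integrable.mono' (g := fun s => ((A s)^2 + (B (-s))^2)/2)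
      (by simpa using (hA2int.add hB2negint).div_const 2)
      ((hAmeas.mul (hBmeas.comp measurable_neg)).aestronglyMeasurable) ?_
    filter_upwards with s
    rw [Real.norm_eq_abs, abs_mul]
    nlinarith [sq_nonneg (|A s| - |B (-s)|), sq_abs (A s), sq_abs (B (-s)),
      abs_nonneg (A s), abs_nonneg (B (-s))]
  have hD2int : IntegrableOn (fun s => (A s - B (-s))^2) I := by
    have h4 : (fun s => (A s - B (-s))^2)
        = fun s => (A s)^2 - 2*(A s * B (-s)) + (B (-s))^2 := funext fun s => by ring
    rw [h4]
    exact (hA2int.sub (hABint.const_mul 2)).add hB2negint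
  have hD2le : (∫ s in I, (A s - B (-s))^2) ≤ U * l^2 := by
    have hsum_int : IntegrableOn (fun s => (A s)^2 + (B (-s))^2) I := hA2int.add hB2negint
    calc (∫ s in I, (A s - B (-s))^2) ≤ ∫ s in I, ((A s)^2 + (B (-s))^2) := by
          refine integral_mono_ae hD2int hsum_int (ae_of_all _ fun s => ?_)
          show (A s - B (-s))^2 ≤ (A s)^2 + (B (-s))^2
          nlinarith [mul_nonneg (hAnn s) (hBnn (-s))]
      _ = (∫ s in I, (A s)^2) + ∫ s in I, (B (-s))^2 := integral_add hA2int hB2negint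
      _ = U * l^2 := by rw [hBneg_eq]; exact hmom2
  -- Cauchy–Schwarz
  have hs2int : IntegrableOn (fun s : ℝ => (-s)^2) I := by
    have h1 : IntegrableOn (fun s : ℝ => s^2) (Ioc (-(U/2)) (U/2)) :=
      (intervalIntegrable_iff_integrableOn_Ioc_of_le hc).1 (intervalIntegral.intervalIntegrable_pow 2)
    exact (h1.mono_set Ioo_subset_Ioc_self).congr (ae_of_all _ fun s => by ring)
  have hcs : (∫ s in I, (-s) * (A s - B (-s)))
      ≤ Real.sqrt (∫ s in I, (-s)^2) * Real.sqrt (∫ s in I, (A s - B (-s))^2) :=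
    my_cauchy_schwarz (measurable_id.neg.aemeasurable)
      ((hAmeas.sub (hBmeas.comp measurable_neg)).aemeasurable) hs2int hD2int
  have hs2val : (∫ s in I, (-s)^2) = U^3/12 := by
    have h0 : (∫ s in I, (-s)^2) = ∫ s in I, s^2 :=
      integral_congr_ae (ae_of_all _ fun s => by ring)
    rw [h0, hI, ← integral_Ioc_eq_integral_Ioo,
      ← intervalIntegral.integral_of_le hc, integral_pow]
    norm_num
    ring
  have htotal : (∫ z : ℝ, (1/2)*(U^2/4 - (ubar z)^2)) ≤ U^2 * l / Real.sqrt 12 := by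
    have h1 : (∫ z : ℝ, (1/2)*(U^2/4 - (ubar z)^2)) = ∫ s in I, (-s) * (A s - B (-s)) := by
      rw [hg_split, hsym, ← integral_add hnegAint hsBint]
      exact integral_congr_ae (ae_of_all _ fun s => by ring)
    rw [h1]
    refine le_trans hcs ?_
    calc Real.sqrt (∫ s in I, (-s)^2) * Real.sqrt (∫ s in I, (A s - B (-s))^2)
        ≤ Real.sqrt (U^3/12) * Real.sqrt (U * l^2) := by
          rw [hs2val]
          exact mul_le_mul_of_nonneg_left (Real.sqrt_le_sqrt hD2le) (Real.sqrt_nonneg _)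
      _ = U^2 * l / Real.sqrt 12 := by
          rw [← Real.sqrt_mul (by positivity : (0:ℝ) ≤ U^3/12)]
          have h2 : U^3/12 * (U * l^2) = (U^2*l)^2 / 12 := by ring
          rw [h2, Real.sqrt_div (by positivity : (0:ℝ) ≤ (U^2*l)^2),
            Real.sqrt_sq (by positivity : (0:ℝ) ≤ U^2*l)]
  have h12 : 0 < Real.sqrt 12 := Real.sqrt_pos.2 (by norm_num)
  have hgoal_eq : (∫ z : ℝ, (1 / 2) * (U ^ 2 / 4 - (ubar z) ^ 2))
      = ∫ z : ℝ, (1/2)*(U^2/4 - (ubar z)^2) := rfl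
  rw [hgoal_eq]
  have hfinal := mul_le_mul_of_nonneg_left htotal (le_of_lt (one_div_pos.2 hU))
  refine le_trans hfinal (le_of_eq ?_)
  field_simp




end
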